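/- H⁰ is closed under the harmonic product *, and the ℚ-linear map sending a finitely supported sequence (w_n)_{n≥0} of elements of H⁰ to ∑_{n≥0} w_n * e₁^{*n} ∈ H¹ (where e₁^{*n} denotes the n-fold harmonic power of e₁, with e₁^{*0} = 1) is a bijection onto H¹. In other words, (H¹, *) is a polynomial algebra over (H⁰, *) in the single variable e₁. -/

import Mathlib

/- STATEMENT 4: H⁰ is closed under the harmonic product, and (H¹,*) is the polynomial
algebra over (H⁰,*) in the variable e₁: the map (w_n)_n ↦ ∑_n w_n * e₁^{*n} is a bijection
from finitely supported H⁰-sequences onto H¹. -/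

noncomputable section

abbrev H : Type := FreeAlgebra ℚ (Fin 2)

def e0 : H := FreeAlgebra.ι ℚ 0
def e1 : H := FreeAlgebra.ι ℚ 1

/-- `e_{(m)} = e₁ e₀^{m-1}`. -/
def eE (m : ℕ+) : H := e1 * e0 ^ ((m : ℕ) - 1)

/-- `e_k` for an index `k`. -/
def eIdx : List ℕ+ → H
  | [] => 1
  | m :: ks => eE m * eIdx ks

/-- An index is admissible if it is empty or its last entry is ≥ 2. -/
def Admissible (k : List ℕ+) : Prop := ∀ a : ℕ+, k.getLast? = some a → 2 ≤ a

/-- `H¹`, the span of the `e_k`. -/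
def H1 : Submodule ℚ H := Submodule.span ℚ (Set.range eIdx)

/-- `H⁰`, the span of the `e_k` for admissible `k`. -/
def H0 : Submodule ℚ H := Submodule.span ℚ (eIdx '' {k | Admissible k})

/-- The `n`-fold harmonic power `e₁^{*n}` of `e₁`. -/
def harmPow (mul : H →ₗ[ℚ] H →ₗ[ℚ] H) : ℕ → H
  | 0 => 1
  | n + 1 => mul e1 (harmPow mul n)

lemma eIdx_nil : eIdx [] = 1 := rfl

lemma eIdx_append (k l : List ℕ+) : eIdx (k ++ l) = eIdx k * eIdx l := by
  induction k with
  | nil => simp [eIdx]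
  | cons a k ih => simp [eIdx, ih, mul_assoc]

lemma eIdx_concat (k : List ℕ+) (a : ℕ+) : eIdx (k ++ [a]) = eIdx k * eE a := by
  rw [eIdx_append]; simp [eIdx]

lemma eE_one : eE 1 = e1 := by simp [eE]

lemma eIdx_single (a : ℕ+) : eIdx [a] = eE a := by simp [eIdx]

lemma eIdx_one : eIdx [1] = e1 := by rw [eIdx_single, eE_one]

/-- number of trailing ones -/
def tr (k : List ℕ+) : ℕ := (k.reverse.takeWhile (· == 1)).length

lemma tr_nil : tr [] = 0 := rfl

lemma tr_concat_one (k : List ℕ+) : tr (k ++ [1]) = tr k + 1 := by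
  simp [tr, List.takeWhile_cons]

lemma tr_concat_ne (k : List ℕ+) {a : ℕ+} (h : a ≠ 1) : tr (k ++ [a]) = 0 := by
  simp [tr, List.takeWhile_cons, h]

lemma two_le_of_ne_one {a : ℕ+} (h : a ≠ 1) : 2 ≤ a :=
  lt_of_le_of_ne a.one_le (Ne.symm h)

lemma adm_concat {a : ℕ+} (k : List ℕ+) (h : a ≠ 1) : Admissible (k ++ [a]) := by
  intro b hb
  rw [List.getLast?_concat] at hb
  cases hb
  exact two_le_of_ne_one h

lemma tr_eq_zero_of_adm {k : List ℕ+} (h : Admissible k) : tr k = 0 := by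
  rcases List.eq_nil_or_concat k with rfl | ⟨L, b, rfl⟩
  · rfl
  · rw [List.concat_eq_append] at h ⊢
    have hb : 2 ≤ b := h b List.getLast?_concat
    have : b ≠ 1 := by
      intro e; rw [e] at hb; exact absurd hb (by decide)
    exact tr_concat_ne L this

lemma tr_adm_replicate {k : List ℕ+} (h : Admissible k) (n : ℕ) :
    tr (k ++ List.replicate n 1) = n := by
  induction n with
  | zero => simpa using tr_eq_zero_of_adm h
  | succ m ih =>
      rw [List.replicate_succ', ← List.append_assoc, tr_concat_one, ih]

lemma head?_dropWhile {α : Type*} (p : α → Bool) (l : List α) {a : α}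
    (h : (l.dropWhile p).head? = some a) : p a = false := by
  induction l with
  | nil => simp at h
  | cons b l ih =>
      rw [List.dropWhile_cons] at h
      by_cases hb : p b = true
      · rw [if_pos hb] at h; exact ih h
      · rw [if_neg hb] at h
        simp at h
        cases h; simpa using hb

lemma exists_decomp (k : List ℕ+) :
    ∃ k₀, Admissible k₀ ∧ k = k₀ ++ List.replicate (tr k) 1 := by
  refine ⟨(k.reverse.dropWhile (· == 1)).reverse, ?_, ?_⟩
  · intro a ha
    rw [List.getLast?_reverse] at ha
    have := head?_dropWhile (· == 1) k.reverse ha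
    simp at this
    exact two_le_of_ne_one this
  · have h1 : (k.reverse.takeWhile (· == 1)).reverse = List.replicate (tr k) 1 := by
      have hall : ∀ b ∈ k.reverse.takeWhile (· == 1), b = 1 := by
        intro b hb
        have := List.mem_takeWhile_imp hb
        simpa using this
      have h2 := List.eq_replicate_of_mem hall
      conv_lhs => rw [h2]
      rw [List.reverse_replicate]
      rfl
    conv_lhs => rw [← k.reverse_reverse, ← List.takeWhile_append_dropWhile (p := (· == 1)) (l := k.reverse)]
    rw [List.reverse_append, h1]

/-- the word in the free monoid corresponding to an index -/
def wrd : List ℕ+ → FreeMonoid (Fin 2)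
  | [] => 1
  | m :: ks => (FreeMonoid.of 1 * (FreeMonoid.of 0) ^ ((m : ℕ) - 1)) * wrd ks

lemma equiv_eIdx (k : List ℕ+) :
    FreeAlgebra.equivMonoidAlgebraFreeMonoid (eIdx k)
      = MonoidAlgebra.of ℚ (FreeMonoid (Fin 2)) (wrd k) := by
  induction k with
  | nil =>
      simp only [eIdx, wrd, map_one, MonoidAlgebra.of_apply]
  | cons a ks ih =>
      rw [eIdx, wrd, map_mul, map_mul, ih, eE, map_mul, map_pow, map_mul]
      have h0 : FreeAlgebra.equivMonoidAlgebraFreeMonoid e0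
          = MonoidAlgebra.of ℚ (FreeMonoid (Fin 2)) (FreeMonoid.of 0) := by
        simp [e0, FreeAlgebra.equivMonoidAlgebraFreeMonoid]
      have h1 : FreeAlgebra.equivMonoidAlgebraFreeMonoid e1
          = MonoidAlgebra.of ℚ (FreeMonoid (Fin 2)) (FreeMonoid.of 1) := by
        simp [e1, FreeAlgebra.equivMonoidAlgebraFreeMonoid]
      rw [h0, h1, ← map_pow, ← map_mul]


lemma toList_of_pow (x : Fin 2) (n : ℕ) :
    FreeMonoid.toList ((FreeMonoid.of x) ^ n) = List.replicate n x := by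
  induction n with
  | zero => rfl
  | succ m ih =>
      rw [pow_succ, FreeMonoid.toList_mul, ih, FreeMonoid.toList_of, List.replicate_succ']

lemma wrd_toList (a : ℕ+) (ks : List ℕ+) :
    FreeMonoid.toList (wrd (a :: ks))
      = 1 :: (List.replicate ((a:ℕ)-1) 0 ++ FreeMonoid.toList (wrd ks)) := by
  rw [wrd, FreeMonoid.toList_mul, FreeMonoid.toList_mul, FreeMonoid.toList_of, toList_of_pow]
  rfl

lemma wrd_head (k : List ℕ+) :
    FreeMonoid.toList (wrd k) = [] ∨ ∃ u, FreeMonoid.toList (wrd k) = 1 :: u := by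
  cases k with
  | nil => left; rfl
  | cons a ks => right; exact ⟨_, wrd_toList a ks⟩

lemma replicate_cancel : ∀ (a b : ℕ) (w w' : List (Fin 2)),
    (w = [] ∨ ∃ u, w = 1 :: u) → (w' = [] ∨ ∃ u, w' = 1 :: u) →
    List.replicate a 0 ++ w = List.replicate b 0 ++ w' → a = b ∧ w = w' := by
  intro a
  induction a with
  | zero =>
      intro b w w' hw hw' h
      cases b with
      | zero => simpa using h
      | succ b =>
          simp only [List.replicate_succ, List.nil_append] at h
          rcases hw with rfl | ⟨u, rfl⟩
          · exact absurd h.symm (by simp)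
          · rw [List.cons_append] at h
            cases h
  | succ a ih =>
      intro b w w' hw hw' h
      cases b with
      | zero =>
          simp only [List.replicate_succ, List.nil_append] at h
          rcases hw' with rfl | ⟨u, rfl⟩
          · exact absurd h (by simp)
          · rw [List.cons_append] at h
            cases h
      | succ b =>
          simp only [List.replicate_succ, List.cons_append, List.cons.injEq] at h
          obtain ⟨hab, hw2⟩ := ih b w w' hw hw' h.2
          exact ⟨by omega, hw2⟩

lemma pnat_sub_inj {a b : ℕ+} (h : (a : ℕ) - 1 = (b : ℕ) - 1) : a = b := by
  have ha := a.one_le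
  have hb := b.one_le
  have : (a : ℕ) = (b : ℕ) := by
    have ha' : 1 ≤ (a:ℕ) := ha
    have hb' : 1 ≤ (b:ℕ) := hb
    omega
  exact PNat.coe_injective this

lemma wrd_inj : Function.Injective wrd := by
  intro k
  induction k with
  | nil =>
      intro l h
      cases l with
      | nil => rfl
      | cons b ls =>
          exfalso
          have h2 : FreeMonoid.toList (wrd []) = FreeMonoid.toList (wrd (b :: ls)) := by rw [h]
          rw [wrd_toList] at h2
          exact List.cons_ne_nil _ _ h2.symm
  | cons a ks ih =>
      intro l h
      cases l with
      | nil =>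
          exfalso
          have h2 : FreeMonoid.toList (wrd (a :: ks)) = FreeMonoid.toList (wrd []) := by rw [h]
          rw [wrd_toList] at h2
          exact List.cons_ne_nil _ _ h2
      | cons b ls =>
          have h2 : FreeMonoid.toList (wrd (a :: ks)) = FreeMonoid.toList (wrd (b :: ls)) := by
            rw [h]
          rw [wrd_toList, wrd_toList] at h2
          have h3 := (List.cons.injEq _ _ _ _ ▸ h2).2
          obtain ⟨hab, hw⟩ := replicate_cancel _ _ _ _ (wrd_head ks) (wrd_head ls) h3
          have hkl : wrd ks = wrd ls := FreeMonoid.toList.injective hw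
          rw [pnat_sub_inj hab, ih hkl]

lemma eIdx_li : LinearIndependent ℚ eIdx := by
  classical
  have h1 : LinearIndependent ℚ
      (fun w : FreeMonoid (Fin 2) => (Finsupp.single w (1:ℚ) : FreeMonoid (Fin 2) →₀ ℚ)) := by
    have := (Finsupp.basisSingleOne (R := ℚ) (ι := FreeMonoid (Fin 2))).linearIndependent
    rwa [Finsupp.coe_basisSingleOne] at this
  have h2 : LinearIndependent ℚ
      (fun w : FreeMonoid (Fin 2) => (MonoidAlgebra.of ℚ (FreeMonoid (Fin 2)) w)) := by
    have hfe : (fun w : FreeMonoid (Fin 2) => (MonoidAlgebra.of ℚ (FreeMonoid (Fin 2)) w))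
        = fun w : FreeMonoid (Fin 2) => MonoidAlgebra.basis (FreeMonoid (Fin 2)) ℚ w := by
      funext w
      rw [MonoidAlgebra.of_apply, MonoidAlgebra.basis_apply]
    rw [hfe]
    exact (MonoidAlgebra.basis (FreeMonoid (Fin 2)) ℚ).linearIndependent
  have h3 := h2.map'
    (FreeAlgebra.equivMonoidAlgebraFreeMonoid (R := ℚ) (X := Fin 2)).symm.toLinearEquiv.toLinearMap
    (FreeAlgebra.equivMonoidAlgebraFreeMonoid (R := ℚ) (X := Fin 2)).symm.toLinearEquiv.ker
  have he : eIdx =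
      ⇑(FreeAlgebra.equivMonoidAlgebraFreeMonoid
          (R := ℚ) (X := Fin 2)).symm.toLinearEquiv.toLinearMap ∘
        (fun w : FreeMonoid (Fin 2) => (MonoidAlgebra.of ℚ (FreeMonoid (Fin 2)) w)) ∘ wrd := by
    funext k
    simp only [Function.comp_apply, LinearEquiv.coe_coe, AlgEquiv.toLinearEquiv_apply,
      ← equiv_eIdx]
    exact (AlgEquiv.symm_apply_apply _ _).symm
  rw [he, ← Function.comp_assoc]
  exact h3.comp wrd wrd_inj

/-- filtration by number of trailing ones -/
def Flt (n : ℕ) : Submodule ℚ H := Submodule.span ℚ (eIdx '' {k | tr k ≤ n})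

def Glt : ℕ → Submodule ℚ H
  | 0 => ⊥
  | n + 1 => Flt n

lemma Flt_mono {m n : ℕ} (h : m ≤ n) : Flt m ≤ Flt n :=
  Submodule.span_mono (Set.image_mono fun k hk => le_trans hk h)

lemma Flt_le_H1 (n : ℕ) : Flt n ≤ H1 :=
  Submodule.span_mono (by rintro x ⟨k, -, rfl⟩; exact ⟨k, rfl⟩)

lemma mem_Flt {k : List ℕ+} {n : ℕ} (h : tr k ≤ n) : eIdx k ∈ Flt n :=
  Submodule.subset_span ⟨k, h, rfl⟩

lemma Glt_le_Flt (n : ℕ) : Glt n ≤ Flt n := by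
  cases n with
  | zero => exact bot_le
  | succ m => exact Flt_mono (Nat.le_succ m)

lemma Glt_mono {m n : ℕ} (h : m ≤ n) : Glt m ≤ Glt n := by
  cases m with
  | zero => exact bot_le
  | succ a =>
      cases n with
      | zero => omega
      | succ b => exact Flt_mono (by omega)

lemma adm_iff_tr {k : List ℕ+} : Admissible k ↔ tr k = 0 := by
  constructor
  · exact tr_eq_zero_of_adm
  · intro h
    obtain ⟨k₀, hadm, hk⟩ := exists_decomp k
    rw [h] at hk
    simpa [hk] using hadm

lemma H0_eq_Flt0 : H0 = Flt 0 := by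
  unfold H0 Flt
  congr 1
  congr 1
  ext k
  simp [adm_iff_tr, Nat.le_zero]

/-- right multiplication by `eE 1` raises filtration by one -/
lemma mulE_one {m : ℕ} {x : H} (hx : x ∈ Flt m) : x * eE 1 ∈ Flt (m + 1) := by
  induction hx using Submodule.span_induction with
  | mem y hy =>
      obtain ⟨k, hk, rfl⟩ := hy
      rw [← eIdx_concat]
      have hk' : tr k ≤ m := hk
      exact mem_Flt (by rw [tr_concat_one]; omega)
  | zero => simp
  | add y z _ _ hy hz => rw [add_mul]; exact add_mem hy hz
  | smul a y _ hy => rw [smul_mul_assoc]; exact Submodule.smul_mem _ _ hy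

/-- right multiplication by `eE a`, `a ≠ 1`, lands in filtration 0 -/
lemma mulE_ne {m : ℕ} {a : ℕ+} (ha : a ≠ 1) {x : H} (hx : x ∈ Flt m) : x * eE a ∈ Flt 0 := by
  induction hx using Submodule.span_induction with
  | mem y hy =>
      obtain ⟨k, hk, rfl⟩ := hy
      rw [← eIdx_concat]
      exact mem_Flt (by rw [tr_concat_ne _ ha])
  | zero => simp
  | add y z _ _ hy hz => rw [add_mul]; exact add_mem hy hz
  | smul c y _ hy => rw [smul_mul_assoc]; exact Submodule.smul_mem _ _ hy

lemma mulE_one_G {n : ℕ} {x : H} (hx : x ∈ Glt n) : x * eE 1 ∈ Glt (n + 1) := by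
  cases n with
  | zero =>
      rw [show Glt 0 = ⊥ from rfl, Submodule.mem_bot] at hx
      rw [hx, zero_mul]; exact zero_mem _
  | succ m => exact mulE_one hx

/-- multiplying an element of `Flt 0` by `e_{1^n}` on the right lands in `Flt n` -/
lemma mulRepl {n : ℕ} {x : H} (hx : x ∈ Flt 0) :
    x * eIdx (List.replicate n 1) ∈ Flt n := by
  induction hx using Submodule.span_induction with
  | mem y hy =>
      obtain ⟨k, hk, rfl⟩ := hy
      rw [← eIdx_append]
      refine mem_Flt ?_
      rw [tr_adm_replicate (adm_iff_tr.mpr (Nat.le_zero.mp hk))]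
  | zero => simp
  | add y z _ _ hy hz => rw [add_mul]; exact add_mem hy hz
  | smul c y _ hy => rw [smul_mul_assoc]; exact Submodule.smul_mem _ _ hy

lemma tr_one_single : tr [1] = 1 := by
  have := tr_concat_one []
  simpa [tr_nil] using this

lemma pnat_add_ne_one (a b : ℕ+) : a + b ≠ 1 := by
  intro h
  have h2 : ((a + b : ℕ+) : ℕ) = 1 := by rw [h]; rfl
  rw [PNat.add_coe] at h2
  have ha := a.pos
  have hb := b.pos
  omega

lemma two_ne_one' : (2 : ℕ+) ≠ 1 := by decide

lemma adm_nil : Admissible ([] : List ℕ+) := by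
  intro a ha
  simp at ha

lemma tr_replicate (n : ℕ) : tr (List.replicate n 1) = n := by
  have := tr_adm_replicate adm_nil n
  simpa using this

section MulLemmas

variable (mul : H →ₗ[ℚ] H →ₗ[ℚ] H)
  (hOneL : ∀ l : List ℕ+, mul (eIdx []) (eIdx l) = eIdx l)
  (hOneR : ∀ k : List ℕ+, mul (eIdx k) (eIdx []) = eIdx k)
  (hRec : ∀ (k l : List ℕ+) (a b : ℕ+),
      mul (eIdx (k ++ [a])) (eIdx (l ++ [b])) =
        mul (eIdx (k ++ [a])) (eIdx l) * eE b
        + mul (eIdx k) (eIdx (l ++ [b])) * eE a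
        - mul (eIdx k) (eIdx l) * eE (a + b))

include hOneL hOneR hRec in
lemma lemF : ∀ k l : List ℕ+, mul (eIdx k) (eIdx l) ∈ Flt (tr k + tr l) := by
  suffices h : ∀ n (k l : List ℕ+), k.length + l.length ≤ n →
      mul (eIdx k) (eIdx l) ∈ Flt (tr k + tr l) from fun k l => h _ k l le_rfl
  intro n
  induction n with
  | zero =>
      intro k l hlen
      have hk : k = [] := by cases k <;> simp_all
      have hl : l = [] := by cases l <;> simp_all
      subst hk; subst hl
      rw [hOneR]
      exact mem_Flt (by simp [tr_nil])
  | succ n ih =>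
      intro k l hlen
      rcases List.eq_nil_or_concat k with rfl | ⟨K, a, rfl⟩
      · rw [hOneL]; exact mem_Flt (by simp [tr_nil])
      rcases List.eq_nil_or_concat l with rfl | ⟨L, b, rfl⟩
      · rw [List.concat_eq_append, hOneR]; exact mem_Flt (by simp [tr_nil])
      simp only [List.concat_eq_append] at hlen ⊢
      rw [hRec K L a b]
      have hlen1 : K.length + (L ++ [b]).length ≤ n := by simp at hlen ⊢; omega
      have hlen2 : (K ++ [a]).length + L.length ≤ n := by simp at hlen ⊢; omega
      have hlen3 : K.length + L.length ≤ n := by simp at hlen ⊢; omega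
      have hX := ih _ _ hlen2
      have hY := ih _ _ hlen1
      have hZ := ih _ _ hlen3
      refine sub_mem (add_mem ?_ ?_) ?_
      · by_cases hb : b = 1
        · subst hb
          exact Flt_mono (by rw [tr_concat_one]; omega) (mulE_one hX)
        · exact Flt_mono (Nat.zero_le _) (mulE_ne hb hX)
      · by_cases ha : a = 1
        · subst ha
          exact Flt_mono (by rw [tr_concat_one]; omega) (mulE_one hY)
        · exact Flt_mono (Nat.zero_le _) (mulE_ne ha hY)
      · exact Flt_mono (Nat.zero_le _) (mulE_ne (pnat_add_ne_one a b) hZ)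

include hOneL hOneR hRec in
lemma lemE1G {n : ℕ} {x : H} (hx : x ∈ Glt n) : mul (eIdx [1]) x ∈ Flt n := by
  cases n with
  | zero =>
      rw [show Glt 0 = ⊥ from rfl, Submodule.mem_bot] at hx
      rw [hx, map_zero]
      exact zero_mem _
  | succ m =>
      rw [show Glt (m+1) = Flt m from rfl] at hx
      induction hx using Submodule.span_induction with
      | mem y hy =>
          obtain ⟨l, hl, rfl⟩ := hy
          have hl' : tr l ≤ m := hl
          refine Flt_mono ?_ (lemF mul hOneL hOneR hRec [1] l)
          rw [tr_one_single]
          omega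
      | zero => rw [map_zero]; exact zero_mem _
      | add y z _ _ hy hz => rw [map_add]; exact add_mem hy hz
      | smul a y _ hy => rw [map_smul]; exact Submodule.smul_mem _ _ hy

include hOneL hOneR hRec in
lemma lemAdmG {k : List ℕ+} (hadm : Admissible k) {n : ℕ} {x : H} (hx : x ∈ Glt n) :
    mul (eIdx k) x ∈ Glt n := by
  cases n with
  | zero =>
      rw [show Glt 0 = ⊥ from rfl, Submodule.mem_bot] at hx ⊢
      rw [hx, map_zero]
  | succ m =>
      rw [show Glt (m+1) = Flt m from rfl] at hx ⊢
      induction hx using Submodule.span_induction with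
      | mem y hy =>
          obtain ⟨l, hl, rfl⟩ := hy
          have hl' : tr l ≤ m := hl
          refine Flt_mono ?_ (lemF mul hOneL hOneR hRec k l)
          rw [tr_eq_zero_of_adm hadm]
          omega
      | zero => rw [map_zero]; exact zero_mem _
      | add y z _ _ hy hz => rw [map_add]; exact add_mem hy hz
      | smul a y _ hy => rw [map_smul]; exact Submodule.smul_mem _ _ hy

include hOneL hOneR hRec in
lemma lemL : ∀ (n : ℕ) (k : List ℕ+), Admissible k →
    mul (eIdx k) (eIdx (List.replicate n 1)) - eIdx (k ++ List.replicate n 1) ∈ Glt n := by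
  intro n
  induction n with
  | zero =>
      intro k _
      simp only [List.replicate_zero, List.append_nil]
      rw [hOneR, sub_self]
      exact zero_mem _
  | succ n ih =>
      intro k hk
      rcases List.eq_nil_or_concat k with rfl | ⟨K, a, rfl⟩
      · rw [hOneL]
        simp only [List.nil_append, sub_self]
        exact zero_mem _
      rw [List.concat_eq_append] at hk ⊢
      have ha : a ≠ 1 := by
        have h2 : 2 ≤ a := hk a List.getLast?_concat
        intro e; rw [e] at h2; exact absurd h2 (by decide)
      have hrep : List.replicate (n+1) (1:ℕ+) = List.replicate n 1 ++ [1] :=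
        List.replicate_succ'
      rw [hrep, hRec K (List.replicate n 1) a 1]
      have hD := ih (K ++ [a]) hk
      have hE : eIdx ((K ++ [a]) ++ (List.replicate n 1 ++ [1]))
          = eIdx ((K ++ [a]) ++ List.replicate n 1) * eE 1 := by
        rw [← List.append_assoc, eIdx_concat]
      rw [hE]
      have hGF : Glt (n+1) = Flt n := rfl
      have hiden : mul (eIdx (K ++ [a])) (eIdx (List.replicate n 1)) * eE 1
            + mul (eIdx K) (eIdx (List.replicate n 1 ++ [1])) * eE a
            - mul (eIdx K) (eIdx (List.replicate n 1)) * eE (a + 1)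
            - eIdx ((K ++ [a]) ++ List.replicate n 1) * eE 1
          = (mul (eIdx (K ++ [a])) (eIdx (List.replicate n 1))
              - eIdx ((K ++ [a]) ++ List.replicate n 1)) * eE 1
            + (mul (eIdx K) (eIdx (List.replicate n 1 ++ [1])) * eE a
              - mul (eIdx K) (eIdx (List.replicate n 1)) * eE (a + 1)) := by
        noncomm_ring
      rw [hiden]
      refine add_mem (mulE_one_G hD) (sub_mem ?_ ?_)
      · rw [hGF]
        exact Flt_mono (Nat.zero_le n)
          (mulE_ne ha (lemF mul hOneL hOneR hRec K (List.replicate n 1 ++ [1])))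
      · rw [hGF]
        exact Flt_mono (Nat.zero_le n)
          (mulE_ne (pnat_add_ne_one a 1) (lemF mul hOneL hOneR hRec K (List.replicate n 1)))

include hOneL hOneR hRec in
lemma lemL1 : ∀ n : ℕ, mul (eIdx [1]) (eIdx (List.replicate n 1))
    - ((n:ℚ)+1) • eIdx (List.replicate (n+1) 1) ∈ Glt n := by
  intro n
  induction n with
  | zero =>
      simp only [List.replicate_zero, Nat.cast_zero, zero_add, one_smul, List.replicate_one]
      rw [hOneR, sub_self]
      exact zero_mem _
  | succ n ih =>
      have hrep : List.replicate (n+1) (1:ℕ+) = List.replicate n 1 ++ [1] :=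
        List.replicate_succ'
      have hrec := hRec [] (List.replicate n 1) 1 1
      rw [List.nil_append] at hrec
      rw [hrep, hrec, hOneL, hOneL]
      have hGF : Glt (n+1) = Flt n := rfl
      have h1 : eIdx (List.replicate n 1 ++ [1]) = eIdx (List.replicate (n+1) 1) := by
        rw [← hrep]
      have h2 : eIdx (List.replicate (n+1) 1) * eE 1 = eIdx (List.replicate (n+2) 1) := by
        rw [← eIdx_concat, ← List.replicate_succ']
      have hc : (((n+1:ℕ):ℚ)+1) = ((n:ℚ)+1) + 1 := by push_cast; ring
      have key : mul (eIdx [1]) (eIdx (List.replicate n 1)) * eE 1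
            + eIdx (List.replicate n 1 ++ [1]) * eE 1
            - eIdx (List.replicate n 1) * eE (1 + 1)
            - (((n+1:ℕ):ℚ)+1) • eIdx (List.replicate (n+1+1) 1)
          = (mul (eIdx [1]) (eIdx (List.replicate n 1))
              - ((n:ℚ)+1) • eIdx (List.replicate (n+1) 1)) * eE 1
            - eIdx (List.replicate n 1) * eE (1 + 1) := by
        rw [h1, hc, sub_mul, smul_mul_assoc, h2]
        have h3 : eIdx (List.replicate (n+1+1) 1) = eIdx (List.replicate (n+2) 1) := rfl
        rw [h3]
        module
      rw [key]
      refine sub_mem (mulE_one_G ih) ?_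
      rw [hGF]
      have hmem : eIdx (List.replicate n 1) ∈ Flt n := mem_Flt (by rw [tr_replicate])
      exact Flt_mono (Nat.zero_le n) (mulE_ne (pnat_add_ne_one 1 1) hmem)

include hOneL hOneR hRec in
lemma lemP : ∀ n : ℕ, harmPow mul n - ((Nat.factorial n : ℕ) : ℚ) • eIdx (List.replicate n 1) ∈ Glt n := by
  intro n
  induction n with
  | zero =>
      simp only [harmPow, List.replicate_zero, Nat.factorial_zero, Nat.cast_one, one_smul]
      rw [eIdx_nil, sub_self]
      exact zero_mem _
  | succ n ih =>
      have h1 : harmPow mul (n+1) = mul (eIdx [1]) (harmPow mul n) := by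
        rw [harmPow, eIdx_one]
      have hr1 := lemL1 mul hOneL hOneR hRec n
      have hGF : Glt (n+1) = Flt n := rfl
      have key : harmPow mul (n+1) - ((Nat.factorial (n+1) : ℕ) : ℚ) • eIdx (List.replicate (n+1) 1)
          = ((Nat.factorial n : ℕ) : ℚ) • (mul (eIdx [1]) (eIdx (List.replicate n 1))
              - ((n:ℚ)+1) • eIdx (List.replicate (n+1) 1))
            + mul (eIdx [1]) (harmPow mul n - ((Nat.factorial n : ℕ) : ℚ) • eIdx (List.replicate n 1)) := by
        rw [h1, map_sub, map_smul]
        have hfac : ((Nat.factorial (n+1) : ℕ) : ℚ) = ((n:ℚ)+1) * ((Nat.factorial n : ℕ) : ℚ) := by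
          rw [Nat.factorial_succ]; push_cast; ring
        rw [hfac]
        module
      rw [key, hGF]
      exact add_mem (Submodule.smul_mem _ _ (Glt_le_Flt n hr1))
        (lemE1G mul hOneL hOneR hRec ih)

include hOneL hOneR hRec in
lemma lemM (n : ℕ) : ∀ w ∈ H0,
    mul w (harmPow mul n) - ((Nat.factorial n : ℕ) : ℚ) • (w * eIdx (List.replicate n 1)) ∈ Glt n := by
  intro w hw
  induction hw using Submodule.span_induction with
  | mem x hx =>
      obtain ⟨k, hadm, rfl⟩ := hx
      have hadm' : Admissible k := hadm
      have hP := lemP mul hOneL hOneR hRec n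
      have hL := lemL mul hOneL hOneR hRec n k hadm'
      have key : mul (eIdx k) (harmPow mul n)
            - ((Nat.factorial n : ℕ) : ℚ) • (eIdx k * eIdx (List.replicate n 1))
          = ((Nat.factorial n : ℕ) : ℚ) • (mul (eIdx k) (eIdx (List.replicate n 1))
              - eIdx (k ++ List.replicate n 1))
            + mul (eIdx k) (harmPow mul n - ((Nat.factorial n : ℕ) : ℚ) • eIdx (List.replicate n 1)) := by
        rw [map_sub, map_smul, eIdx_append]
        module
      rw [key]
      exact add_mem (Submodule.smul_mem _ _ hL)
        (lemAdmG mul hOneL hOneR hRec hadm' hP)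
  | zero =>
      simp only [map_zero, LinearMap.zero_apply, zero_mul, smul_zero, sub_zero]
      exact zero_mem _
  | add x y _ _ ihx ihy =>
      have key : mul (x + y) (harmPow mul n)
            - ((Nat.factorial n : ℕ) : ℚ) • ((x + y) * eIdx (List.replicate n 1))
          = (mul x (harmPow mul n) - ((Nat.factorial n : ℕ) : ℚ) • (x * eIdx (List.replicate n 1)))
            + (mul y (harmPow mul n) - ((Nat.factorial n : ℕ) : ℚ) • (y * eIdx (List.replicate n 1))) := by
        rw [map_add, LinearMap.add_apply, add_mul]
        module
      rw [key]
      exact add_mem ihx ihy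
  | smul a x _ ihx =>
      have key : mul (a • x) (harmPow mul n)
            - ((Nat.factorial n : ℕ) : ℚ) • ((a • x) * eIdx (List.replicate n 1))
          = a • (mul x (harmPow mul n) - ((Nat.factorial n : ℕ) : ℚ) • (x * eIdx (List.replicate n 1))) := by
        rw [map_smul, LinearMap.smul_apply, smul_mul_assoc]
        module
      rw [key]
      exact Submodule.smul_mem _ _ ihx

include hOneL hOneR hRec in
lemma mul_H0_closed : ∀ u ∈ H0, ∀ v ∈ H0, mul u v ∈ H0 := by
  rw [H0_eq_Flt0]
  intro u hu v hv
  induction hu using Submodule.span_induction with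
  | mem x hx =>
      obtain ⟨k, hk, rfl⟩ := hx
      have hk' : tr k ≤ 0 := hk
      induction hv using Submodule.span_induction with
      | mem y hy =>
          obtain ⟨l, hl, rfl⟩ := hy
          have hl' : tr l ≤ 0 := hl
          refine Flt_mono ?_ (lemF mul hOneL hOneR hRec k l)
          omega
      | zero => rw [map_zero]; exact zero_mem _
      | add y z _ _ hy hz => rw [map_add]; exact add_mem hy hz
      | smul a y _ hy => rw [map_smul]; exact Submodule.smul_mem _ _ hy
  | zero => rw [map_zero, LinearMap.zero_apply]; exact zero_mem _
  | add x y _ _ hx hy => rw [map_add, LinearMap.add_apply]; exact add_mem hx hy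
  | smul a x _ hx => rw [map_smul, LinearMap.smul_apply]; exact Submodule.smul_mem _ _ hx

include hOneL hOneR hRec in
lemma mul_H1_closed : ∀ u ∈ H1, ∀ v ∈ H1, mul u v ∈ H1 := by
  intro u hu v hv
  induction hu using Submodule.span_induction with
  | mem x hx =>
      obtain ⟨k, rfl⟩ := hx
      induction hv using Submodule.span_induction with
      | mem y hy =>
          obtain ⟨l, rfl⟩ := hy
          exact Flt_le_H1 _ (lemF mul hOneL hOneR hRec k l)
      | zero => rw [map_zero]; exact zero_mem _
      | add y z _ _ hy hz => rw [map_add]; exact add_mem hy hz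
      | smul a y _ hy => rw [map_smul]; exact Submodule.smul_mem _ _ hy
  | zero => rw [map_zero, LinearMap.zero_apply]; exact zero_mem _
  | add x y _ _ hx hy => rw [map_add, LinearMap.add_apply]; exact add_mem hx hy
  | smul a x _ hx => rw [map_smul, LinearMap.smul_apply]; exact Submodule.smul_mem _ _ hx

include hOneL hOneR hRec in
lemma harmPow_H1 : ∀ n, harmPow mul n ∈ H1 := by
  intro n
  induction n with
  | zero => exact Submodule.subset_span ⟨[], rfl⟩
  | succ n ih =>
      rw [harmPow, ← eIdx_one]
      exact mul_H1_closed mul hOneL hOneR hRec _ (Submodule.subset_span ⟨[1], rfl⟩) _ ih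

end MulLemmas

lemma Glt_eq {P : ℕ} (h : 1 ≤ P) : Glt P = Flt (P - 1) := by
  cases P with
  | zero => omega
  | succ M => rfl

lemma H0_le_H1 : H0 ≤ H1 :=
  Submodule.span_mono (by rintro x ⟨k, -, rfl⟩; exact ⟨k, rfl⟩)

theorem stmt_4
    (mul : H →ₗ[ℚ] H →ₗ[ℚ] H)
    (hOneL : ∀ l : List ℕ+, mul (eIdx []) (eIdx l) = eIdx l)
    (hOneR : ∀ k : List ℕ+, mul (eIdx k) (eIdx []) = eIdx k)
    (hRec : ∀ (k l : List ℕ+) (a b : ℕ+),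
      mul (eIdx (k ++ [a])) (eIdx (l ++ [b])) =
        mul (eIdx (k ++ [a])) (eIdx l) * eE b
        + mul (eIdx k) (eIdx (l ++ [b])) * eE a
        - mul (eIdx k) (eIdx l) * eE (a + b)) :
    (∀ u ∈ H0, ∀ v ∈ H0, mul u v ∈ H0) ∧
    (Function.Injective (fun w : ℕ →₀ H0 => w.sum fun n v => mul (v : H) (harmPow mul n))) ∧
    (Set.range (fun w : ℕ →₀ H0 => w.sum fun n v => mul (v : H) (harmPow mul n))
      = (H1 : Set H)) := by
  classical
  set Φ : (ℕ →₀ H0) →ₗ[ℚ] H :=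
    Finsupp.lsum ℚ (fun n => (LinearMap.flip mul (harmPow mul n)).comp H0.subtype) with hΦdef
  have hΦ : ∀ w : ℕ →₀ H0, Φ w = w.sum fun n v => mul (v : H) (harmPow mul n) := by
    intro w
    rw [hΦdef, Finsupp.lsum_apply]
    rfl
  have hsingle : ∀ (n : ℕ) (v : H0), Φ (Finsupp.single n v) = mul (v : H) (harmPow mul n) := by
    intro n v
    rw [hΦ]
    exact Finsupp.sum_single_index (by simp)
  -- the "kill the top filtration piece" lemma
  have hzero : ∀ N (x : H), x ∈ H0 → x * eIdx (List.replicate N 1) ∈ Glt N → x = 0 := by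
    intro N x hx hmem
    cases N with
    | zero =>
        rw [show Glt 0 = ⊥ from rfl, Submodule.mem_bot] at hmem
        simpa [eIdx_nil] using hmem
    | succ M =>
        rw [show Glt (M+1) = Flt M from rfl, Flt] at hmem
        rw [H0] at hx
        obtain ⟨c, hcsupp, hcx⟩ := (Finsupp.mem_span_image_iff_linearCombination ℚ).mp hx
        obtain ⟨d, hdsupp, hdx⟩ := (Finsupp.mem_span_image_iff_linearCombination ℚ).mp hmem
        set app : List ℕ+ → List ℕ+ := fun k => k ++ List.replicate (M+1) 1 with happ
        have happinj : Function.Injective app := by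
          intro k₁ k₂ h
          exact List.append_cancel_right h
        have hmap : Finsupp.linearCombination ℚ eIdx (Finsupp.mapDomain app c)
            = x * eIdx (List.replicate (M+1) 1) := by
          rw [Finsupp.linearCombination_mapDomain]
          have hcomp : eIdx ∘ app
              = ⇑(LinearMap.mulRight ℚ (eIdx (List.replicate (M+1) 1))) ∘ eIdx := by
            funext k
            simp [happ, eIdx_append]
          rw [hcomp, ← Finsupp.apply_linearCombination, hcx]
          rfl
        have heq : Finsupp.mapDomain app c = d := by
          have h0 : Finsupp.linearCombination ℚ eIdx (Finsupp.mapDomain app c - d) = 0 := by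
            rw [map_sub, hmap, hdx, sub_self]
          exact sub_eq_zero.mp (linearIndependent_iff.mp eIdx_li _ h0)
        have hcz : c = 0 := by
          by_contra hc0
          obtain ⟨k, hk⟩ := Finsupp.ne_iff.mp hc0
          simp only [Finsupp.coe_zero, Pi.zero_apply] at hk
          have hkadm : Admissible k := hcsupp (Finsupp.mem_support_iff.mpr hk)
          have hval : (Finsupp.mapDomain app c) (app k) = c k :=
            Finsupp.mapDomain_apply happinj c k
          have hd : d (app k) ≠ 0 := by rw [← heq, hval]; exact hk
          have hmem2 : tr (app k) ≤ M := hdsupp (Finsupp.mem_support_iff.mpr hd)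
          rw [happ] at hmem2
          simp only [] at hmem2
          rw [tr_adm_replicate hkadm] at hmem2
          omega
        rw [← hcx, hcz, map_zero]
  -- injectivity at the linear level
  have hinj0 : ∀ w : ℕ →₀ H0, Φ w = 0 → w = 0 := by
    intro w hw
    by_contra hne
    have hsupp : w.support.Nonempty := Finsupp.support_nonempty_iff.mpr hne
    set N := w.support.max' hsupp with hN
    have hNmem : N ∈ w.support := w.support.max'_mem hsupp
    have hle : ∀ n ∈ w.support, n ≤ N := fun n hn => w.support.le_max' n hn
    set f1 : ℕ → H := fun n =>
      ((Nat.factorial n : ℕ) : ℚ) • ((w n : H) * eIdx (List.replicate n 1)) with hf1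
    set f2 : ℕ → H := fun n =>
      mul ((w n : H)) (harmPow mul n) - f1 n with hf2
    have hsum : (0:H) = (∑ n ∈ w.support, f1 n) + ∑ n ∈ w.support, f2 n := by
      rw [← Finset.sum_add_distrib, ← hw, hΦ, Finsupp.sum]
      refine Finset.sum_congr rfl fun n _ => ?_
      rw [hf2]
      module
    have hf2mem : ∀ n ∈ w.support, f2 n ∈ Glt N := by
      intro n hn
      refine Glt_mono (hle n hn) ?_
      exact lemM mul hOneL hOneR hRec n ((w n : H)) (SetLike.coe_mem _)
    have hf1mem : ∀ n ∈ w.support.erase N, f1 n ∈ Glt N := by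
      intro n hn
      obtain ⟨hne', hn'⟩ := Finset.mem_erase.mp hn
      have hnN : n < N := lt_of_le_of_ne (hle n hn') hne'
      rw [Glt_eq (by omega)]
      refine Submodule.smul_mem _ _ (Flt_mono (by omega) (mulRepl ?_))
      rw [← H0_eq_Flt0]
      exact SetLike.coe_mem _
    have hNterm : f1 N ∈ Glt N := by
      have hsplit : f1 N + ((∑ n ∈ w.support.erase N, f1 n) + ∑ n ∈ w.support, f2 n) = 0 := by
        rw [← add_assoc, Finset.add_sum_erase _ _ hNmem, ← hsum]
      have := eq_neg_of_add_eq_zero_left hsplit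
      rw [this]
      exact neg_mem (add_mem (Submodule.sum_mem _ hf1mem) (Submodule.sum_mem _ hf2mem))
    have hfacne : ((Nat.factorial N : ℕ) : ℚ) ≠ 0 := by
      exact_mod_cast Nat.factorial_ne_zero N
    have hNmem2 : (w N : H) * eIdx (List.replicate N 1) ∈ Glt N := by
      have := Submodule.smul_mem _ (((Nat.factorial N : ℕ) : ℚ)⁻¹) hNterm
      rw [hf1] at this
      simp only [] at this
      rwa [smul_smul, inv_mul_cancel₀ hfacne, one_smul] at this
    have hwN : (w N : H) = 0 := hzero N _ (SetLike.coe_mem _) hNmem2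
    exact Finsupp.mem_support_iff.mp hNmem (ZeroMemClass.coe_eq_zero.mp hwN)
  -- surjectivity onto H1
  have hkey : ∀ n, ∀ k : List ℕ+, tr k = n → eIdx k ∈ LinearMap.range Φ := by
    intro n
    induction n using Nat.strong_induction_on with
    | _ n ihn =>
      intro k hk
      obtain ⟨k₀, hadm, hdec⟩ := exists_decomp k
      rw [hk] at hdec
      have hk₀H0 : eIdx k₀ ∈ H0 := Submodule.subset_span ⟨k₀, hadm, rfl⟩
      have hM := lemM mul hOneL hOneR hRec n (eIdx k₀) hk₀H0
      rw [← eIdx_append, ← hdec] at hM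
      have hΦs : mul (eIdx k₀) (harmPow mul n) ∈ LinearMap.range Φ :=
        ⟨Finsupp.single n ⟨eIdx k₀, hk₀H0⟩, hsingle n _⟩
      have hGle : Glt n ≤ LinearMap.range Φ := by
        cases n with
        | zero => exact bot_le
        | succ m =>
            rw [show Glt (m+1) = Flt m from rfl, Flt, Submodule.span_le]
            rintro y ⟨j, hj, rfl⟩
            have hj' : tr j ≤ m := hj
            exact ihn (tr j) (by omega) j rfl
      have hmem : ((Nat.factorial n : ℕ) : ℚ) • eIdx k ∈ LinearMap.range Φ := by
        have h2 := Submodule.sub_mem _ hΦs (hGle hM)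
        rwa [sub_sub_cancel] at h2
      have hfacne : ((Nat.factorial n : ℕ) : ℚ) ≠ 0 := by
        exact_mod_cast Nat.factorial_ne_zero n
      have := Submodule.smul_mem _ (((Nat.factorial n : ℕ) : ℚ)⁻¹) hmem
      rwa [smul_smul, inv_mul_cancel₀ hfacne, one_smul] at this
  have hfeq : (fun w : ℕ →₀ H0 => w.sum fun n v => mul (v : H) (harmPow mul n)) = ⇑Φ := by
    funext w
    exact (hΦ w).symm
  refine ⟨mul_H0_closed mul hOneL hOneR hRec, ?_, ?_⟩
  · rw [hfeq]
    intro a b hab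
    exact sub_eq_zero.mp (hinj0 _ (by rw [map_sub, hab, sub_self]))
  · rw [hfeq, ← LinearMap.coe_range]
    refine congrArg (fun S : Submodule ℚ H => (S : Set H)) (le_antisymm ?_ ?_)
    · intro x hx
      obtain ⟨w, rfl⟩ := hx
      rw [hΦ, Finsupp.sum]
      refine Submodule.sum_mem _ fun n _ => ?_
      exact mul_H1_closed mul hOneL hOneR hRec _ (H0_le_H1 (SetLike.coe_mem _)) _
        (harmPow_H1 mul hOneL hOneR hRec n)
    · rw [H1, Submodule.span_le]
      rintro y ⟨k, rfl⟩
      exact hkey (tr k) k rfl
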